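/- Let τ be a matching of [2n]. Then there exists w ∈ S̃_{2n}^0 such that g_τ = w·g_0·w^{−1}, where ℓ(w) = n(n−1)/2 − c(τ) and ℓ(g_τ) = 2·ℓ(w). -/

import Mathlib

open Finset

noncomputable section
open scoped Classical

/-- The cyclic (clockwise) half-open interval `(a, b]` in `Fin m`. -/
def cIoc {m : ℕ} (a b : Fin m) : Finset (Fin m) :=
  univ.filter fun k => if a < b then a < k ∧ k ≤ b else a < k ∨ k ≤ b

/-- The open cyclic (clockwise) arc from `a` to `b` in `Fin m`, excluding both endpoints. -/
def cIoo {m : ℕ} (a b : Fin m) : Finset (Fin m) :=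
  univ.filter fun k => if a < b then a < k ∧ k < b else (a < k ∨ k < b) ∧ k ≠ a ∧ k ≠ b

/-- Set partitions of `[n] = Fin n`. -/
abbrev NCP (n : ℕ) := Finpartition (univ : Finset (Fin n))

/-- `a` and `b` lie in the same block of `σ`. -/
def sameBlock {n : ℕ} (σ : NCP n) (a b : Fin n) : Prop :=
  ∃ B ∈ σ.parts, a ∈ B ∧ b ∈ B

/-- `σ` is a noncrossing partition: there are no `a < b < c < d` with `a, c` in one
block and `b, d` in a different block. -/
def IsNoncrossing {n : ℕ} (σ : NCP n) : Prop :=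
  ∀ a b c d : Fin n, a < b → b < c → c < d →
    sameBlock σ a c → sameBlock σ b d → sameBlock σ a b

/-- The relation defining the dual (Kreweras complement) partition: `ĩ ~ j̃` iff no block
of `σ` meets both cyclic intervals `{(i+1), …, j}` and `{(j+1), …, i}`. -/
def dualRel {n : ℕ} (σ : NCP n) (i j : Fin n) : Prop :=
  i = j ∨ ¬ ∃ B ∈ σ.parts, (B ∩ cIoc i j).Nonempty ∧ (B ∩ cIoc j i).Nonempty

/-- The point `ī` of `[2n]` (0-based: `ī = 2i`). -/
def bar {n : ℕ} (i : Fin n) : Fin (2*n) := ⟨2*(i:ℕ), by have := i.isLt; omega⟩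

/-- The point `ĩ` of `[2n]` (0-based: `ĩ = 2i+1`). -/
def til {n : ℕ} (i : Fin n) : Fin (2*n) := ⟨2*(i:ℕ)+1, by have := i.isLt; omega⟩

/-- A matching (fixed-point-free involution) of `Fin m`. -/
def IsMatching {m : ℕ} (τ : Fin m → Fin m) : Prop :=
  Function.Involutive τ ∧ ∀ i, τ i ≠ i

/-- A noncrossing matching: there are no `a < b < c < d` with `τ a = c` and `τ b = d`. -/
def IsNCMatching {m : ℕ} (τ : Fin m → Fin m) : Prop :=
  ¬ ∃ a b c d : Fin m, a < b ∧ b < c ∧ c < d ∧ τ a = c ∧ τ b = d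

/-- `j` is the cyclic predecessor of `i` in the block of `σ` containing `i`
(`j = i` when `i` is a singleton). -/
def cyclicPred {n : ℕ} (σ : NCP n) (j i : Fin n) : Prop :=
  ∃ B ∈ σ.parts, i ∈ B ∧ j ∈ B ∧ ∀ x ∈ B, x ∉ cIoo j i

/-- `m` is the medial pairing of `σ`: it pairs `ī` (0-based `2i`) with `j̃` (0-based `2j+1`),
where `j` is the cyclic predecessor of `i` in its block. -/
def IsMedialOf {n : ℕ} (σ : NCP n) (m : Fin (2*n) → Fin (2*n)) : Prop :=
  ∀ i j : Fin n, m (bar i) = til j ↔ cyclicPred σ j i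

/-- The crossing number of a matching: the number of pairs `{a,b}` with
`a < b < τ a < τ b`. -/
def crossNum {m : ℕ} (τ : Fin m → Fin m) : ℕ :=
  ((univ : Finset (Fin m × Fin m)).filter fun p =>
    p.1 < p.2 ∧ p.2 < τ p.1 ∧ τ p.1 < τ p.2).card

/-- `a`, `b`, `c`, `d` are distinct and in cyclic order on `Fin m`. -/
def CyclicOrder4 {m : ℕ} (a b c d : Fin m) : Prop :=
  (a < b ∧ b < c ∧ c < d) ∨ (b < c ∧ c < d ∧ d < a) ∨
  (c < d ∧ d < a ∧ a < b) ∨ (d < a ∧ a < b ∧ b < c)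

/-- `τ` covers `τ'` in the uncrossing order. -/
def UncrossCover {m : ℕ} (τ' τ : Fin m → Fin m) : Prop :=
  IsMatching τ' ∧ IsMatching τ ∧
  ∃ a b c d : Fin m, CyclicOrder4 a b c d ∧ τ a = c ∧ τ b = d ∧
    (∀ x, x ≠ a → x ≠ b → x ≠ c → x ≠ d → τ' x = τ x) ∧
    ((τ' a = d ∧ τ' b = c ∧ ∀ x ∈ cIoo a b, τ x ∉ cIoo c d) ∨
     (τ' a = b ∧ τ' c = d ∧ ∀ x ∈ cIoo b c, τ x ∉ cIoo d a))

/-- The uncrossing partial order on matchings: reflexive-transitive closure of covers. -/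
def uncrossLE {m : ℕ} (τ' τ : Fin m → Fin m) : Prop :=
  Relation.ReflTransGen UncrossCover τ' τ

/-- An affine permutation of period `m`. -/
def IsAffinePerm (m : ℕ) (f : ℤ → ℤ) : Prop :=
  Function.Bijective f ∧ ∀ i : ℤ, f (i + m) = f i + m

/-- The length of an affine permutation of period `m`:
`#{(i,j) : 1 ≤ i ≤ m, i < j, f i > f j}`. -/
def affLen (m : ℕ) (f : ℤ → ℤ) : ℕ :=
  Set.ncard {p : ℤ × ℤ | 1 ≤ p.1 ∧ p.1 ≤ (m:ℤ) ∧ p.1 < p.2 ∧ f p.2 < f p.1}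

/-- The affine rank matrix `r_f(i,j) = #{a ≤ i : f a ≥ j}`. -/
def rankMat (f : ℤ → ℤ) (i j : ℤ) : ℕ :=
  Set.ncard {a : ℤ | a ≤ i ∧ j ≤ f a}

/-- Affine Bruhat order via rank matrices. -/
def bruhatLE (f g : ℤ → ℤ) : Prop := ∀ i j : ℤ, rankMat f i j ≤ rankMat g i j

/-- The sum `Σ_{i=1}^m (f i − i)`. -/
def windowSum (m : ℕ) (f : ℤ → ℤ) : ℤ :=
  ∑ i ∈ Finset.range m, (f ((i:ℤ)+1) - ((i:ℤ)+1))

/-- The affine permutation `g_τ` associated to a matching `τ` of `[2n]`: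
on `[2n]`, `g_τ i = τ i` if `τ i > i` and `g_τ i = τ i + 2n` if `τ i < i`,
extended periodically. -/
def gTau (n : ℕ) (τ : Fin (2*n) → Fin (2*n)) (i : ℤ) : ℤ :=
  if h : (i % ((2*n : ℕ) : ℤ)).toNat < 2*n then
    let r : Fin (2*n) := ⟨(i % ((2*n : ℕ) : ℤ)).toNat, h⟩
    (i - i % ((2*n : ℕ) : ℤ)) +
      (if r < τ r then ((τ r : ℕ) : ℤ) else ((τ r : ℕ) : ℤ) + 2*n)
  else i

/-- `f_τ = g_τ − 1`. -/
def fTau (n : ℕ) (τ : Fin (2*n) → Fin (2*n)) (i : ℤ) : ℤ := gTau n τ i - 1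

/-- An electrical affine permutation for `n`. -/
def IsElectrical (n : ℕ) (f : ℤ → ℤ) : Prop :=
  IsAffinePerm (2*n) f ∧
  (∀ i : ℤ, i ≤ f i ∧ f i ≤ i + 2*n - 2) ∧
  windowSum (2*n) f = ((n:ℤ) - 1) * (2*n) ∧
  ∀ i : ℤ, (f (f i + 1) - (i - 1)) % ((2*n : ℕ) : ℤ) = 0

/-- The Grassmann necklace subset `I_a(f) ⊆ [m]`: representatives in `[m]` (0-based) of
`{f b mod m : b < a and f b ≥ a}`. -/
def necklaceI (m : ℕ) (f : ℤ → ℤ) (a : ℤ) : Finset (Fin m) :=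
  univ.filter fun x => ∃ b : ℤ, b < a ∧ a ≤ f b ∧ f b % (m:ℤ) = ((x:ℕ):ℤ)

/-- The dual necklace subset `J_a(f) ⊆ [m]`: representatives in `[m]` (0-based) of
`{b mod m : b < a and f b ≥ a}`. -/
def necklaceJ (m : ℕ) (f : ℤ → ℤ) (a : ℤ) : Finset (Fin m) :=
  univ.filter fun x => ∃ b : ℤ, b < a ∧ a ≤ f b ∧ b % (m:ℤ) = ((x:ℕ):ℤ)

/-- Dominance order on `k`-element subsets of `Fin m`:
the `r`-th smallest element of `I` is at most the `r`-th smallest element of `J`. -/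
def domLE {m : ℕ} (k : ℕ) (I J : Finset (Fin m)) : Prop :=
  ∃ (hI : I.card = k) (hJ : J.card = k),
    ∀ r : Fin k, I.orderEmbOfFin hI r ≤ J.orderEmbOfFin hJ r

/-- `a`-shifted dominance order: rotate so that `a` becomes least, then compare. -/
def sdomLE {m : ℕ} (k : ℕ) (a : Fin m) (I J : Finset (Fin m)) : Prop :=
  domLE k (I.image (· - a)) (J.image (· - a))

/-- `a`-shifted lexicographic order on subsets of `Fin m`. -/
def lexLE {m : ℕ} (a : Fin m) (I J : Finset (Fin m)) : Prop :=
  I = J ∨ List.Lex (· < ·) ((I.image (· - a)).sort (· ≤ ·)) ((J.image (· - a)).sort (· ≤ ·))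

/-- A Catalan subset of `[2n]` (0-based): an `(n−1)`-subset such that the length-`2n`
word with `U` at positions `{0} ∪ {x+1 : x ∈ I}` and `D` elsewhere is a Dyck path. -/
def IsCatalan {n : ℕ} (I : Finset (Fin (2*n))) : Prop :=
  I.card = n - 1 ∧
  ∀ p : ℕ, p ≤ 2*n →
    p ≤ 2 * ((insert 0 (I.image fun x => (x:ℕ)+1)).filter (· < p)).card

/-- Catalan subset with respect to the shifted order `≤_a`. -/
def IsCatalanAt {n : ℕ} (a : Fin (2*n)) (I : Finset (Fin (2*n))) : Prop :=
  IsCatalan (I.image (· - a))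

/-- The set of maxima of `S` with respect to the `a`-shifted order. -/
def maxAt {m : ℕ} (a : Fin m) (S : Finset (Fin m)) : Finset (Fin m) :=
  S.filter fun x => ∀ y ∈ S, y - a ≤ x - a

/-- `I_a(σ)` for a noncrossing partition `σ`: the complement in `[2n]` of the set of
`≤_a`-maxima of the blocks of `σ` (embedded by `bar`) and of the blocks of the dual
partition `σ̃` (embedded by `til`). -/
def IaP {n : ℕ} (σ : NCP n) (a : Fin (2*n)) : Finset (Fin (2*n)) :=
  univ \ ((σ.parts.biUnion fun B => maxAt a (B.image bar)) ∪
          ((univ : Finset (Fin n)).biUnion fun i =>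
            maxAt a ((univ.filter (dualRel σ i)).image til)))

/-- `I` is concordant with `σ`: `I` has `n−1` elements and every block of `σ` and of
its dual `σ̃` contains exactly one element of `[2n] ∖ I`. -/
def Concordant {n : ℕ} (σ : NCP n) (I : Finset (Fin (2*n))) : Prop :=
  I.card = n - 1 ∧
  (∀ B ∈ σ.parts, ((B.image bar) ∩ (univ \ I)).card = 1) ∧
  (∀ i : Fin n, (((univ.filter (dualRel σ i)).image til) ∩ (univ \ I)).card = 1)

/-- `E(I)`: the set of noncrossing partitions concordant with `I`. -/
def ESet {n : ℕ} (I : Finset (Fin (2*n))) : Set (NCP n) :=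
  {σ | IsNoncrossing σ ∧ Concordant σ I}

/-- The maximal minor `Δ_I(X)` on the columns indexed by `I`, in increasing order. -/
def minorOn {k m : ℕ} (X : Matrix (Fin k) (Fin m) ℝ) (I : Finset (Fin m)) : ℝ :=
  if h : I.card = k then (X.submatrix id fun r => I.orderEmbOfFin h r).det else 0

/-- `X` is totally nonnegative: it has full rank `k` and all maximal minors are `≥ 0`. -/
def IsTNN {k m : ℕ} (X : Matrix (Fin k) (Fin m) ℝ) : Prop :=
  X.rank = k ∧ ∀ I : Finset (Fin m), I.card = k → 0 ≤ minorOn X I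

/-- `t` times the matrix unit `E_{p,q}` (0-based indices). -/
def matE (m : ℕ) (p q : ℕ) (t : ℝ) : Matrix (Fin m) (Fin m) ℝ :=
  Matrix.of fun r s => if (r:ℕ) = p ∧ (s:ℕ) = q then t else 0

/-- `x_i(t) = Id + t·E_{i,i+1}` (1-based index `i`). -/
def xB (m i : ℕ) (t : ℝ) : Matrix (Fin m) (Fin m) ℝ := 1 + matE m (i-1) i t

/-- `y_i(t) = Id + t·E_{i+1,i}` (1-based index `i`). -/
def yB (m i : ℕ) (t : ℝ) : Matrix (Fin m) (Fin m) ℝ := 1 + matE m i (i-1) t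

/-- `u_i(t) = x_i(t)·y_{i−1}(t)` (1-based index `i`). -/
def uB (m i : ℕ) (t : ℝ) : Matrix (Fin m) (Fin m) ℝ := xB m i t * yB m (i-1) t

/-- The columns of `X`, extended `n`-periodically to all integer indices (0-based). -/
def colP {k n : ℕ} (X : Matrix (Fin k) (Fin n) ℝ) (i : ℤ) : Fin k → ℝ :=
  fun r => if h : (i % (n:ℤ)).toNat < n then X r ⟨(i % (n:ℤ)).toNat, h⟩ else 0

/-- `f_X(i) = min { j ≥ i : v_i ∈ span(v_{i+1}, …, v_j) }` (0-based columns). -/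
def fX {k n : ℕ} (X : Matrix (Fin k) (Fin n) ℝ) (i : ℤ) : ℤ :=
  sInf {j : ℤ | i ≤ j ∧ colP X i ∈ Submodule.span ℝ (colP X '' Set.Ioc i j)}

/-- Fintype instance for finite partitions of a finite set. -/
instance {α : Type*} [DecidableEq α] [Fintype α] (s : Finset α) : Fintype (Finpartition s) :=
  Fintype.ofInjective Finpartition.parts fun _ _ h => Finpartition.ext h

/-- The sorted list of (the values of) a subset of `Fin m`. -/
def sortedL {m : ℕ} (I : Finset (Fin m)) : List ℕ :=
  (I.sort (· ≤ ·)).map Fin.val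

/-- The number of inversions of a list (= the number of adjacent transpositions
needed to sort it, when entries are distinct). -/
def invNum (l : List ℕ) : ℕ :=
  ((Finset.range l.length ×ˢ Finset.range l.length).filter fun pq =>
    pq.1 < pq.2 ∧ l.getD pq.2 0 < l.getD pq.1 0).card

/-- The subset of `Fin m` whose values lie in the list `l`. -/
def toFinF {m : ℕ} (l : List ℕ) : Finset (Fin m) :=
  univ.filter fun x => (x:ℕ) ∈ l

/-- The double sum `Σ_{σ ∈ E(l), κ ∈ E(l')} L σ · L κ`, where `E` of a list with a
repeated entry (or an out-of-range entry) is empty. -/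
def pairSum {n : ℕ} (L : NCP n → ℝ) (l l' : List ℕ) : ℝ :=
  if (l.Nodup ∧ ∀ x ∈ l, x < 2*n) ∧ (l'.Nodup ∧ ∀ x ∈ l', x < 2*n) then
    ∑ᶠ σ ∈ ESet (n := n) (toFinF l), ∑ᶠ κ ∈ ESet (n := n) (toFinF l'), L σ * L κ
  else 0

/-- The list obtained from `LI` by replacing its entries at the positions in `S`
(in increasing order of position) by the first `#S` entries of `LJ`. -/
def swapI (LI LJ : List ℕ) (S : Finset ℕ) : List ℕ :=
  (List.range LI.length).map fun p =>
    if p ∈ S then LJ.getD ((S.filter (· < p)).card) 0 else LI.getD p 0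

/-- The list obtained from `LJ` by replacing its first `#S` entries by the entries of
`LI` at the positions in `S`, in increasing order. -/
def swapJ (LI LJ : List ℕ) (S : Finset ℕ) : List ℕ :=
  (List.range LJ.length).map fun p =>
    if p < S.card then LI.getD ((S.sort (· ≤ ·)).getD p 0) 0 else LJ.getD p 0

namespace Stmt4Aux

lemma dvd_trichot {M a : ℤ} (hM : 0 < M) (h : M ∣ a) : a ≤ -M ∨ a = 0 ∨ M ≤ a := by
  rcases lt_trichotomy a 0 with h1 | h1 | h1
  · left; have := Int.le_of_dvd (by omega) (dvd_neg.2 h); omega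
  · omega
  · right; right; exact Int.le_of_dvd h1 h

lemma dvd_small {M a : ℤ} (hM : 0 < M) (h : M ∣ a) (h0 : 0 ≤ a) (h2 : a < 2*M) :
    a = 0 ∨ a = M := by
  rcases dvd_trichot hM h with h1 | h1 | h1
  · omega
  · omega
  · right
    have h3 : M ∣ (a - M) := (dvd_sub_right h).2 dvd_rfl
    rcases dvd_trichot hM h3 with h4 | h4 | h4 <;> omega

lemma decomp_emod {M d r : ℤ} (hd : M ∣ d) (h0 : 0 ≤ r) (h1 : r < M) : (d + r) % M = r := by
  obtain ⟨k, rfl⟩ := hd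
  rw [mul_comm, add_comm, Int.add_mul_emod_self_right, Int.emod_eq_of_lt h0 h1]

/-- generic "affine permutation from values on a window" -/
def mkAff (n : ℕ) (u : Fin (2*n) → ℕ) (x : ℤ) : ℤ :=
  if h : ((x % ((2*n : ℕ) : ℤ)).toNat) < 2*n then
    x - x % ((2*n : ℕ) : ℤ) + (u ⟨(x % ((2*n : ℕ) : ℤ)).toNat, h⟩ : ℤ)
  else x

def gv (n : ℕ) (τ : Fin (2*n) → Fin (2*n)) (x : Fin (2*n)) : ℕ :=
  if (x : ℕ) < (τ x : ℕ) then (τ x : ℕ) else (τ x : ℕ) + 2*n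

lemma gTau_eq_mkAff (n : ℕ) (τ : Fin (2*n) → Fin (2*n)) :
    gTau n τ = mkAff n (gv n τ) := by
  funext x
  unfold gTau mkAff gv
  split
  next h =>
    dsimp only
    by_cases hc : (⟨(x % ((2*n:ℕ):ℤ)).toNat, h⟩ : Fin (2*n)) < τ ⟨(x % ((2*n:ℕ):ℤ)).toNat, h⟩
    · rw [if_pos hc, if_pos (show (x % ((2*n:ℕ):ℤ)).toNat < (τ ⟨(x % ((2*n:ℕ):ℤ)).toNat, h⟩ : ℕ) from hc)]
    · rw [if_neg hc, if_neg (show ¬ (x % ((2*n:ℕ):ℤ)).toNat < (τ ⟨(x % ((2*n:ℕ):ℤ)).toNat, h⟩ : ℕ) from hc)]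
      push_cast; ring
  next h => rfl

lemma mkAff_decomp {n : ℕ} (hn : 0 < n) (u : Fin (2*n) → ℕ) {x d : ℤ} (r : Fin (2*n))
    (hd : ((2*n : ℕ) : ℤ) ∣ d) (hx : x = d + ((r : ℕ) : ℤ)) :
    mkAff n u x = d + (u r : ℤ) := by
  have hr := r.isLt
  have he : x % ((2*n : ℕ) : ℤ) = ((r : ℕ) : ℤ) := by
    rw [hx]; exact decomp_emod hd (by positivity) (by exact_mod_cast hr)
  unfold mkAff
  rw [he]
  simp only [Int.toNat_natCast]
  rw [dif_pos hr]
  simp only [Fin.eta]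
  omega

lemma exists_decomp {n : ℕ} (hn : 0 < n) (x : ℤ) :
    ∃ (d : ℤ) (r : Fin (2*n)), ((2*n : ℕ) : ℤ) ∣ d ∧ x = d + ((r : ℕ) : ℤ) := by
  have hM : (0:ℤ) < ((2*n : ℕ) : ℤ) := by positivity
  have h0 : 0 ≤ x % ((2*n : ℕ) : ℤ) := Int.emod_nonneg x hM.ne'
  have h1 : x % ((2*n : ℕ) : ℤ) < ((2*n : ℕ) : ℤ) := Int.emod_lt_of_pos x hM
  refine ⟨x - x % ((2*n : ℕ) : ℤ), ⟨(x % ((2*n : ℕ) : ℤ)).toNat, by omega⟩,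
    Int.dvd_self_sub_of_emod_eq rfl, by simp only [Fin.val_mk]; rw [Int.toNat_of_nonneg h0]; ring⟩



variable {n : ℕ} (τ : Fin (2*n) → Fin (2*n))

def OSet : Finset (Fin (2*n)) := univ.filter fun i => (i:ℕ) < (τ i : ℕ)

variable {τ}

lemma tau_ne (hτ : IsMatching τ) (x : Fin (2*n)) : (τ x : ℕ) ≠ (x : ℕ) :=
  fun h => hτ.2 x (Fin.ext h)

lemma card_OSet (hτ : IsMatching τ) : (OSet τ).card = n := by
  have h1 : (OSet τ).card = (univ.filter fun (i : Fin (2*n)) => ¬ (i:ℕ) < (τ i : ℕ)).card := by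
    apply Finset.card_bij (fun a _ => τ a)
    · intro a ha
      simp only [OSet, Finset.mem_filter, Finset.mem_univ, true_and] at ha ⊢
      rw [hτ.1 a]; omega
    · intro a _ b _ h; exact hτ.1.injective h
    · intro b hb
      simp only [OSet, Finset.mem_filter, Finset.mem_univ, true_and] at hb ⊢
      refine ⟨τ b, ?_, hτ.1 b⟩
      rw [hτ.1 b]
      have := tau_ne hτ b
      omega
  have h2 := Finset.card_filter_add_card_filter_not
    (s := (univ : Finset (Fin (2*n)))) (p := fun (i : Fin (2*n)) => (i:ℕ) < (τ i : ℕ))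
  rw [Finset.card_univ, Fintype.card_fin] at h2
  have h3 : (OSet τ).card = (univ.filter fun (i : Fin (2*n)) => (i:ℕ) < (τ i : ℕ)).card := rfl
  omega

def eF (hO : (OSet τ).card = n) : Fin n → Fin (2*n) := (OSet τ).orderEmbOfFin hO

lemma eF_opener (hO : (OSet τ).card = n) (k : Fin n) : (eF hO k : ℕ) < (τ (eF hO k) : ℕ) := by
  have := Finset.orderEmbOfFin_mem (OSet τ) hO k
  simp only [OSet, Finset.mem_filter, Finset.mem_univ, true_and] at this
  exact this

lemma eF_mono (hO : (OSet τ).card = n) : StrictMono (eF hO) :=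
  ((OSet τ).orderEmbOfFin hO).strictMono

lemma eF_inj (hO : (OSet τ).card = n) : Function.Injective (eF hO) := (eF_mono hO).injective

lemma eF_surj (hO : (OSet τ).card = n) {x : Fin (2*n)} (hx : (x:ℕ) < (τ x : ℕ)) :
    ∃ k, eF hO k = x := by
  have hm : x ∈ OSet τ := by
    simp only [OSet, Finset.mem_filter, Finset.mem_univ, true_and]; exact hx
  have := (OSet τ).range_orderEmbOfFin hO
  rw [← Finset.mem_coe, ← this] at hm
  exact hm

def idxF (hn : 0 < n) (hO : (OSet τ).card = n) : Fin (2*n) → Fin n := fun x =>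
  if hx : (x:ℕ) < (τ x : ℕ) then Classical.choose (eF_surj hO hx) else ⟨0, hn⟩

lemma eF_idxF (hn : 0 < n) (hO : (OSet τ).card = n) {x : Fin (2*n)} (hx : (x:ℕ) < (τ x : ℕ)) :
    eF hO (idxF hn hO x) = x := by
  unfold idxF; rw [dif_pos hx]; exact Classical.choose_spec (eF_surj hO hx)

lemma idxF_eF (hn : 0 < n) (hO : (OSet τ).card = n) (k : Fin n) :
    idxF hn hO (eF hO k) = k :=
  eF_inj hO (eF_idxF hn hO (eF_opener hO k))

def vF (hO : (OSet τ).card = n) : Fin (2*n) → Fin (2*n) := fun i =>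
  if h : (i:ℕ) < n then eF hO ⟨i, h⟩
  else τ (eF hO ⟨(i:ℕ) - n, by have := i.isLt; omega⟩)

lemma vF_lt (hO : (OSet τ).card = n) (i : Fin (2*n)) (h : (i:ℕ) < n) :
    vF hO i = eF hO ⟨i, h⟩ := dif_pos h

lemma vF_ge (hO : (OSet τ).card = n) (i : Fin (2*n)) (h : ¬ (i:ℕ) < n) :
    vF hO i = τ (eF hO ⟨(i:ℕ) - n, by have := i.isLt; omega⟩) := dif_neg h

lemma vF_inj (hτ : IsMatching τ) (hO : (OSet τ).card = n) : Function.Injective (vF hO) := by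
  intro i j h
  unfold vF at h
  split at h <;> split at h
  · next hi hj => exact Fin.ext (by simpa using congrArg Fin.val (eF_inj hO h))
  · next hi hj =>
    exfalso
    set y := eF hO ⟨(j:ℕ) - n, _⟩ with hy
    have h1 : (y:ℕ) < (τ y : ℕ) := eF_opener hO _
    have h2 := eF_opener hO (⟨(i:ℕ), hi⟩ : Fin n)
    rw [h] at h2
    rw [hτ.1 y] at h2
    omega
  · next hi hj =>
    exfalso
    set y := eF hO ⟨(i:ℕ) - n, _⟩ with hy
    have h1 : (y:ℕ) < (τ y : ℕ) := eF_opener hO _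
    have h2 := eF_opener hO (⟨(j:ℕ), hj⟩ : Fin n)
    rw [← h] at h2
    rw [hτ.1 y] at h2
    omega
  · next hi hj =>
    have h' := hτ.1.injective h
    have := congrArg Fin.val (eF_inj hO h')
    simp at this
    have hi2 := i.isLt; have hj2 := j.isLt
    exact Fin.ext (by omega)

lemma vF_surj (hτ : IsMatching τ) (hO : (OSet τ).card = n) : Function.Surjective (vF hO) :=
  Finite.surjective_of_injective (vF_inj hτ hO)



section WProps

variable {n : ℕ} {τ : Fin (2*n) → Fin (2*n)}

/-- the window values of `w` -/
def uW (hO : (OSet τ).card = n) : Fin (2*n) → ℕ := fun i => (vF hO i : ℕ)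

lemma mkAff_period {n : ℕ} (hn : 0 < n) (u : Fin (2*n) → ℕ) (x : ℤ) :
    mkAff n u (x + ((2*n : ℕ) : ℤ)) = mkAff n u x + ((2*n : ℕ) : ℤ) := by
  obtain ⟨d, r, hd, rfl⟩ := exists_decomp hn x
  rw [mkAff_decomp hn u r hd rfl,
    mkAff_decomp hn u r (d := d + ((2*n : ℕ) : ℤ)) (dvd_add hd dvd_rfl) (by ring)]
  ring

lemma uW_lt (hO : (OSet τ).card = n) (i : Fin (2*n)) : uW hO i < 2*n := (vF hO i).isLt

lemma w_inj (hn : 0 < n) (hτ : IsMatching τ) (hO : (OSet τ).card = n) :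
    Function.Injective (mkAff n (uW hO)) := by
  intro x y h
  obtain ⟨dx, rx, hdx, rfl⟩ := exists_decomp hn x
  obtain ⟨dy, ry, hdy, rfl⟩ := exists_decomp hn y
  rw [mkAff_decomp hn _ rx hdx rfl, mkAff_decomp hn _ ry hdy rfl] at h
  have hM : (0:ℤ) < ((2*n : ℕ) : ℤ) := by push_cast; omega
  have h1 := uW_lt hO rx
  have h2 := uW_lt hO ry
  have h3 := dvd_trichot hM (dvd_sub hdx hdy)
  have hde : dx = dy := by omega
  subst hde
  have h4 : uW hO rx = uW hO ry := by omega
  have h5 : vF hO rx = vF hO ry := Fin.ext h4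
  rw [vF_inj hτ hO h5]

lemma w_surj (hn : 0 < n) (hτ : IsMatching τ) (hO : (OSet τ).card = n) :
    Function.Surjective (mkAff n (uW hO)) := by
  intro y
  obtain ⟨d, r, hd, rfl⟩ := exists_decomp hn y
  obtain ⟨s, hs⟩ := vF_surj hτ hO r
  exact ⟨d + ((s : ℕ) : ℤ), by rw [mkAff_decomp hn _ s hd rfl]; unfold uW; rw [hs]⟩

lemma w_affine (hn : 0 < n) (hτ : IsMatching τ) (hO : (OSet τ).card = n) :
    IsAffinePerm (2*n) (mkAff n (uW hO)) :=
  ⟨⟨w_inj hn hτ hO, w_surj hn hτ hO⟩, fun i => mkAff_period hn _ i⟩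

lemma w_windowSum (hn : 0 < n) (hτ : IsMatching τ) (hO : (OSet τ).card = n) :
    windowSum (2*n) (mkAff n (uW hO)) = 0 := by
  unfold windowSum
  have h1 : ∀ i ∈ Finset.range (2*n),
      mkAff n (uW hO) ((i:ℤ)+1) - ((i:ℤ)+1)
        = (fun j : ℕ => mkAff n (uW hO) (j:ℤ) - (j:ℤ)) (i+1) := by
    intro i _
    push_cast
    ring_nf
  rw [Finset.sum_congr rfl h1]
  set G : ℕ → ℤ := fun j => mkAff n (uW hO) (j:ℤ) - (j:ℤ) with hG
  have h2 : ∑ i ∈ Finset.range (2*n + 1), G i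
      = ∑ i ∈ Finset.range (2*n), G (i+1) + G 0 := Finset.sum_range_succ' G (2*n)
  have h3 : ∑ i ∈ Finset.range (2*n + 1), G i
      = ∑ i ∈ Finset.range (2*n), G i + G (2*n) := Finset.sum_range_succ G (2*n)
  have h4 : G (2*n) = G 0 := by
    have h := mkAff_period hn (uW hO) 0
    rw [zero_add] at h
    simp only [hG, Nat.cast_zero]
    omega
  have h5 : ∑ i ∈ Finset.range (2*n), G i = 0 := by
    rw [← Fin.sum_univ_eq_sum_range G (2*n)]
    have h6 : ∀ x : Fin (2*n), G (x:ℕ) = ((vF hO x : ℕ) : ℤ) - ((x:ℕ):ℤ) := by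
      intro x
      simp only [hG]
      rw [mkAff_decomp hn _ x (dvd_zero _) (zero_add _).symm]
      unfold uW
      ring
    rw [Finset.sum_congr rfl (fun x _ => h6 x), Finset.sum_sub_distrib]
    have h7 : ∑ x : Fin (2*n), ((vF hO x : ℕ) : ℤ) = ∑ x : Fin (2*n), ((x:ℕ):ℤ) :=
      Fintype.sum_bijective (vF hO) ⟨vF_inj hτ hO, vF_surj hτ hO⟩ _ _ (fun x => rfl)
    rw [h7, sub_self]
  omega

lemma eF_congr {n : ℕ} {τ : Fin (2*n) → Fin (2*n)} (hO : (OSet τ).card = n)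
    {a b : ℕ} (ha : a < n) (hb : b < n) (h : a = b) :
    eF hO ⟨a, ha⟩ = eF hO ⟨b, hb⟩ := by subst h; rfl

lemma w_conj (hn : 0 < n) (hτ : IsMatching τ) (hO : (OSet τ).card = n) (i : ℤ) :
    gTau n τ (mkAff n (uW hO) i) = mkAff n (uW hO) (i + (n:ℤ)) := by
  rw [gTau_eq_mkAff]
  obtain ⟨d, r, hd, rfl⟩ := exists_decomp hn i
  rw [mkAff_decomp hn _ r hd rfl]
  have hg : mkAff n (gv n τ) (d + ((uW hO r : ℕ) : ℤ)) = d + (gv n τ (vF hO r) : ℤ) :=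
    mkAff_decomp hn _ (vF hO r) hd rfl
  rw [hg]
  by_cases hr : (r : ℕ) < n
  · have hv : vF hO r = eF hO ⟨r, hr⟩ := vF_lt hO r hr
    have hop := eF_opener hO ⟨(r:ℕ), hr⟩
    have hgv : gv n τ (vF hO r) = (τ (eF hO ⟨(r:ℕ), hr⟩) : ℕ) := by
      rw [hv]; unfold gv; rw [if_pos hop]
    have hrn : (r : ℕ) + n < 2*n := by have := r.isLt; omega
    have hx : d + ((r:ℕ):ℤ) + (n:ℤ) = d + (((⟨(r:ℕ)+n, hrn⟩ : Fin (2*n)) : ℕ) : ℤ) := by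
      push_cast; ring
    rw [mkAff_decomp hn _ (⟨(r:ℕ)+n, hrn⟩ : Fin (2*n)) hd hx]
    have hge : ¬ ((⟨(r:ℕ)+n, hrn⟩ : Fin (2*n)) : ℕ) < n := by simp
    have hvn : vF hO ⟨(r:ℕ)+n, hrn⟩ = τ (eF hO ⟨(r:ℕ), hr⟩) := by
      rw [vF_ge hO _ hge]
      congr 1
      exact eF_congr hO _ _ (by simp)
    rw [hgv]
    unfold uW
    rw [hvn]
  · obtain ⟨k, hk, hkv⟩ : ∃ k : Fin n, vF hO r = τ (eF hO k) ∧ (k:ℕ) = (r:ℕ) - n :=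
      ⟨_, vF_ge hO r hr, rfl⟩
    have hop := eF_opener hO k
    have hgv : gv n τ (vF hO r) = (eF hO k : ℕ) + 2*n := by
      rw [hk]; unfold gv; rw [hτ.1 (eF hO k)]
      rw [if_neg (by omega)]
    have hrlt := r.isLt
    have hrn : (r : ℕ) - n < 2*n := by omega
    have hx : d + ((r:ℕ):ℤ) + (n:ℤ)
        = (d + ((2*n : ℕ) : ℤ)) + (((⟨(r:ℕ)-n, hrn⟩ : Fin (2*n)) : ℕ) : ℤ) := by
      push_cast; omega
    rw [mkAff_decomp hn _ (⟨(r:ℕ)-n, hrn⟩ : Fin (2*n)) (dvd_add hd dvd_rfl) hx]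
    have hlt : ((⟨(r:ℕ)-n, hrn⟩ : Fin (2*n)) : ℕ) < n := by simp; omega
    have hvn : vF hO ⟨(r:ℕ)-n, hrn⟩ = eF hO k := by
      rw [vF_lt hO _ hlt]
      congr 1
      exact Fin.ext (by simp [hkv])
    rw [hgv]
    unfold uW
    rw [hvn]
    push_cast
    ring

end WProps

section Counting

variable {n : ℕ} (τ : Fin (2*n) → Fin (2*n))

def NestS : Finset (Fin (2*n) × Fin (2*n)) :=
  univ.filter fun p => (p.1:ℕ) < (p.2:ℕ) ∧ (p.1:ℕ) < (τ p.1:ℕ) ∧ (p.2:ℕ) < (τ p.2:ℕ) ∧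
    (τ p.2:ℕ) < (τ p.1:ℕ)

def DisjS : Finset (Fin (2*n) × Fin (2*n)) :=
  univ.filter fun p => (p.1:ℕ) < (τ p.1:ℕ) ∧ (p.2:ℕ) < (τ p.2:ℕ) ∧ (τ p.1:ℕ) < (p.2:ℕ)

def CrossS : Finset (Fin (2*n) × Fin (2*n)) :=
  univ.filter fun p => (p.1:ℕ) < (p.2:ℕ) ∧ (p.2:ℕ) < (τ p.1:ℕ) ∧ (τ p.1:ℕ) < (τ p.2:ℕ)

def OPS : Finset (Fin (2*n) × Fin (2*n)) :=
  univ.filter fun p => (p.1:ℕ) < (p.2:ℕ) ∧ (p.1:ℕ) < (τ p.1:ℕ) ∧ (p.2:ℕ) < (τ p.2:ℕ)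

def D1S : Finset (Fin (2*n) × Fin (2*n)) :=
  univ.filter fun p => (p.1:ℕ) < (p.2:ℕ) ∧ gv n τ p.2 < gv n τ p.1

def D2S : Finset (Fin (2*n) × Fin (2*n)) :=
  univ.filter fun p => gv n τ p.2 + 2*n < gv n τ p.1

def InvVS {τ : Fin (2*n) → Fin (2*n)} (hO : (OSet τ).card = n) :
    Finset (Fin (2*n) × Fin (2*n)) :=
  univ.filter fun p => (p.1:ℕ) < (p.2:ℕ) ∧ (vF hO p.2 : ℕ) < (vF hO p.1 : ℕ)

variable {τ}

lemma crossNum_eq : crossNum τ = (CrossS τ).card := by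
  unfold crossNum CrossS
  congr 1

lemma tau_val_inj (hτ : IsMatching τ) {x y : Fin (2*n)} (h : (τ x : ℕ) = (τ y : ℕ)) :
    (x : ℕ) = (y : ℕ) := by
  have := hτ.1.injective (Fin.ext h)
  exact congrArg Fin.val this

lemma OPS_card_eq (hτ : IsMatching τ) :
    (OPS τ).card = (CrossS τ).card + (NestS τ).card + (DisjS τ).card := by
  classical
  have hids : OPS τ = (CrossS τ ∪ NestS τ) ∪ DisjS τ := by
    ext ⟨x, y⟩
    simp only [OPS, CrossS, NestS, DisjS, Finset.mem_union, Finset.mem_filter,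
      Finset.mem_univ, true_and]
    constructor
    · rintro ⟨h1, h2, h3⟩
      have hne1 : (τ x : ℕ) ≠ (y : ℕ) := by
        intro he
        have : τ x = y := Fin.ext he
        have : τ y = x := by rw [← this, hτ.1]
        have := congrArg Fin.val this
        omega
      have hne2 : (τ x : ℕ) ≠ (τ y : ℕ) := fun he => by have := tau_val_inj hτ he; omega
      rcases Nat.lt_trichotomy (τ x : ℕ) (y : ℕ) with hlt | heq | hgt
      · right; exact ⟨h2, h3, hlt⟩
      · exact absurd heq hne1
      · rcases Nat.lt_trichotomy (τ x : ℕ) (τ y : ℕ) with hlt2 | heq2 | hgt2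
        · left; left; exact ⟨h1, hgt, hlt2⟩
        · exact absurd heq2 hne2
        · left; right; exact ⟨h1, h2, h3, hgt2⟩
    · rintro ((⟨h1, h2, h3⟩ | ⟨h1, h2, h3, h4⟩) | ⟨h1, h2, h3⟩) <;>
        refine ⟨by omega, by omega, by omega⟩
  have hd1 : Disjoint (CrossS τ) (NestS τ) := by
    rw [Finset.disjoint_left]
    rintro ⟨x, y⟩ ha hb
    simp only [CrossS, NestS, Finset.mem_filter, Finset.mem_univ, true_and] at ha hb
    omega
  have hd2 : Disjoint (CrossS τ ∪ NestS τ) (DisjS τ) := by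
    rw [Finset.disjoint_left]
    rintro ⟨x, y⟩ ha hb
    simp only [CrossS, NestS, DisjS, Finset.mem_union, Finset.mem_filter,
      Finset.mem_univ, true_and] at ha hb
    omega
  rw [hids, Finset.card_union_of_disjoint hd2, Finset.card_union_of_disjoint hd1]

lemma OPS_card (hn : 0 < n) (hτ : IsMatching τ) (hO : (OSet τ).card = n) :
    (OPS τ).card = n*(n-1)/2 := by
  classical
  set OPgt : Finset (Fin (2*n) × Fin (2*n)) :=
    univ.filter (fun p => (p.2:ℕ) < (p.1:ℕ) ∧ (p.1:ℕ) < (τ p.1:ℕ) ∧ (p.2:ℕ) < (τ p.2:ℕ))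
    with hOPgt
  have hswap : (OPS τ).card = OPgt.card := by
    apply Finset.card_nbij' (fun p => (p.2, p.1)) (fun p => (p.2, p.1)) <;>
      (rintro ⟨x, y⟩ h) <;>
      simp only [OPS, hOPgt, Finset.mem_coe, Finset.mem_filter, Finset.mem_univ, true_and] at h ⊢ <;>
      tauto
  have hun : OPS τ ∪ OPgt = (OSet τ).offDiag := by
    ext ⟨x, y⟩
    simp only [OPS, hOPgt, OSet, Finset.mem_union, Finset.mem_filter, Finset.mem_offDiag,
      Finset.mem_univ, true_and]
    constructor
    · rintro (⟨h1, h2, h3⟩ | ⟨h1, h2, h3⟩) <;> exact ⟨h2, h3, fun he => by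
        have := congrArg Fin.val he; omega⟩
    · rintro ⟨h1, h2, h3⟩
      have : (x:ℕ) ≠ (y:ℕ) := fun he => h3 (Fin.ext he)
      rcases Nat.lt_or_ge (x:ℕ) (y:ℕ) with h | h
      · left; exact ⟨h, h1, h2⟩
      · right; exact ⟨by omega, h1, h2⟩
  have hdis : Disjoint (OPS τ) OPgt := by
    rw [Finset.disjoint_left]
    rintro ⟨x, y⟩ ha hb
    simp only [OPS, hOPgt, Finset.mem_filter, Finset.mem_univ, true_and] at ha hb
    omega
  have hcard : (OPS τ).card + OPgt.card = n*n - n := by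
    rw [← Finset.card_union_of_disjoint hdis, hun, Finset.offDiag_card, hO]
  have hnn : n * (n-1) = n*n - n := by rw [Nat.mul_sub_one]
  have hn2 : n ≤ n * n := Nat.le_mul_of_pos_left n hn
  omega

end Counting

section Counting2

variable {n : ℕ} {τ : Fin (2*n) → Fin (2*n)}

lemma gv_open {x : Fin (2*n)} (h : (x:ℕ) < (τ x:ℕ)) : gv n τ x = (τ x:ℕ) := if_pos h

lemma gv_closed {x : Fin (2*n)} (h : ¬ (x:ℕ) < (τ x:ℕ)) : gv n τ x = (τ x:ℕ) + 2*n := if_neg h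

lemma tau_vF_ge (hτ : IsMatching τ) (hO : (OSet τ).card = n) {x : Fin (2*n)}
    (h : ¬ (x:ℕ) < n) :
    τ (vF hO x) = eF hO ⟨(x:ℕ)-n, by have := x.isLt; omega⟩ := by
  rw [vF_ge hO x h, hτ.1]

lemma vF_lt_opener (hO : (OSet τ).card = n) {x : Fin (2*n)} (h : (x:ℕ) < n) :
    (vF hO x : ℕ) < (τ (vF hO x) : ℕ) := by
  rw [vF_lt hO x h]; exact eF_opener hO _

lemma vF_ge_closer (hτ : IsMatching τ) (hO : (OSet τ).card = n) {x : Fin (2*n)}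
    (h : ¬ (x:ℕ) < n) :
    (τ (vF hO x) : ℕ) < (vF hO x : ℕ) := by
  rw [tau_vF_ge hτ hO h, vF_ge hO x h]
  exact eF_opener hO _

lemma idx_vF_lt (hn : 0 < n) (hτ : IsMatching τ) (hO : (OSet τ).card = n) {x : Fin (2*n)}
    (h : (x:ℕ) < n) : (idxF hn hO (vF hO x) : ℕ) = (x:ℕ) := by
  rw [vF_lt hO x h, idxF_eF hn hO]

lemma idx_tau_vF_ge (hn : 0 < n) (hτ : IsMatching τ) (hO : (OSet τ).card = n) {x : Fin (2*n)}
    (h : ¬ (x:ℕ) < n) : (idxF hn hO (τ (vF hO x)) : ℕ) = (x:ℕ) - n := by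
  rw [tau_vF_ge hτ hO h, idxF_eF hn hO]

lemma eF_mk_eq (hO : (OSet τ).card = n) {a : ℕ} {ha : a < n} {k : Fin n} (h : a = (k:ℕ)) :
    eF hO ⟨a, ha⟩ = eF hO k := by
  subst h; exact congrArg (eF hO) (Fin.ext rfl)

lemma vF_idx (hn : 0 < n) (hτ : IsMatching τ) (hO : (OSet τ).card = n) {y : Fin (2*n)}
    (hy : (y:ℕ) < (τ y:ℕ)) :
    vF hO ⟨(idxF hn hO y : ℕ), by have := (idxF hn hO y).isLt; omega⟩ = y := by
  rw [vF_lt hO _ (by simpa using (idxF hn hO y).isLt)]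
  exact (eF_mk_eq hO rfl).trans (eF_idxF hn hO hy)

lemma vF_add_n (hn : 0 < n) (hτ : IsMatching τ) (hO : (OSet τ).card = n) {x : Fin (2*n)}
    (hx : (x:ℕ) < (τ x:ℕ)) :
    vF hO ⟨(idxF hn hO x : ℕ) + n, by have := (idxF hn hO x).isLt; omega⟩ = τ x := by
  rw [vF_ge hO _ (by simp)]
  exact congrArg τ ((eF_mk_eq hO (by simp)).trans (eF_idxF hn hO hx))

lemma InvVS_card (hn : 0 < n) (hτ : IsMatching τ) (hO : (OSet τ).card = n) :
    (InvVS hO).card = (NestS τ).card + (DisjS τ).card := by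
  classical
  have hsplit := Finset.card_filter_add_card_filter_not
    (s := InvVS hO) (p := fun p => (p.1:ℕ) < n)
  have hsplit2 := Finset.card_filter_add_card_filter_not
    (s := (InvVS hO).filter (fun p => (p.1:ℕ) < n)) (p := fun p => (p.2:ℕ) < n)
  have hA : ((InvVS hO).filter (fun p => (p.1:ℕ) < n)).filter (fun p => (p.2:ℕ) < n) = ∅ := by
    rw [Finset.eq_empty_iff_forall_notMem]
    rintro ⟨x, y⟩ hm
    simp only [InvVS, Finset.mem_coe, Finset.mem_filter, Finset.mem_univ, true_and] at hm
    obtain ⟨⟨⟨h1, h2⟩, h3⟩, h4⟩ := hm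
    rw [vF_lt hO x h3, vF_lt hO y h4] at h2
    have h5 := eF_mono hO (show (⟨(x:ℕ), h3⟩ : Fin n) < ⟨(y:ℕ), h4⟩ by
      rw [Fin.mk_lt_mk]; exact h1)
    rw [Fin.lt_def] at h5
    omega
  have hB : (((InvVS hO).filter (fun p => (p.1:ℕ) < n)).filter
      (fun p => ¬ (p.2:ℕ) < n)).card = (DisjS τ).card := by
    apply Finset.card_nbij' (i := fun p => (τ (vF hO p.2), vF hO p.1))
      (j := fun q => (⟨(idxF hn hO q.2 : ℕ), by have := (idxF hn hO q.2).isLt; omega⟩,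
                      ⟨(idxF hn hO q.1 : ℕ) + n, by have := (idxF hn hO q.1).isLt; omega⟩))
    · rintro ⟨x, y⟩ hm
      simp only [InvVS, DisjS, Finset.mem_coe, Finset.mem_filter, Finset.mem_univ, true_and] at hm ⊢
      obtain ⟨⟨⟨h1, h2⟩, h3⟩, h4⟩ := hm
      refine ⟨?_, vF_lt_opener hO h3, ?_⟩
      · rw [hτ.1]; exact vF_ge_closer hτ hO h4
      · rw [hτ.1]; exact h2
    · rintro ⟨x, y⟩ hm
      simp only [InvVS, DisjS, Finset.mem_coe, Finset.mem_filter, Finset.mem_univ, true_and] at hm ⊢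
      obtain ⟨h1, h2, h3⟩ := hm
      have e1 := vF_idx hn hτ hO h2
      have e2 := vF_add_n hn hτ hO h1
      refine ⟨⟨⟨?_, ?_⟩, ?_⟩, ?_⟩
      · show (idxF hn hO y : ℕ) < (idxF hn hO x : ℕ) + n
        have := (idxF hn hO y).isLt; omega
      · rw [e1, e2]; exact h3
      · show (idxF hn hO y : ℕ) < n
        exact (idxF hn hO y).isLt
      · show ¬ (idxF hn hO x : ℕ) + n < n
        omega
    · rintro ⟨x, y⟩ hm
      simp only [InvVS, Finset.mem_coe, Finset.mem_filter, Finset.mem_univ, true_and] at hm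
      obtain ⟨⟨⟨h1, h2⟩, h3⟩, h4⟩ := hm
      have e1 := idx_vF_lt hn hτ hO h3
      have e2 := idx_tau_vF_ge hn hτ hO h4
      have hy := y.isLt
      exact Prod.ext (Fin.ext (by simp [e1])) (Fin.ext (by simp [e2]; omega))
    · rintro ⟨x, y⟩ hm
      simp only [DisjS, Finset.mem_coe, Finset.mem_filter, Finset.mem_univ, true_and] at hm
      obtain ⟨h1, h2, h3⟩ := hm
      have e1 := vF_idx hn hτ hO h2
      have e2 := vF_add_n hn hτ hO h1
      refine Prod.ext ?_ ?_
      · show τ (vF hO _) = x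
        rw [e2, hτ.1]
      · show vF hO _ = y
        rw [e1]
  have hC : ((InvVS hO).filter (fun p => ¬ (p.1:ℕ) < n)).card = (NestS τ).card := by
    apply Finset.card_nbij' (i := fun p => (τ (vF hO p.1), τ (vF hO p.2)))
      (j := fun q => (⟨(idxF hn hO q.1 : ℕ) + n, by have := (idxF hn hO q.1).isLt; omega⟩,
                      ⟨(idxF hn hO q.2 : ℕ) + n, by have := (idxF hn hO q.2).isLt; omega⟩))
    · rintro ⟨x, y⟩ hm
      simp only [InvVS, NestS, Finset.mem_coe, Finset.mem_filter, Finset.mem_univ, true_and] at hm ⊢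
      obtain ⟨⟨h1, h2⟩, h3⟩ := hm
      have h4 : ¬ (y:ℕ) < n := by omega
      have e1 := tau_vF_ge hτ hO h3
      have e2 := tau_vF_ge hτ hO h4
      refine ⟨?_, ?_, ?_, ?_⟩
      · rw [e1, e2]
        have h5 := eF_mono hO (show (⟨(x:ℕ)-n, by have := x.isLt; omega⟩ : Fin n)
            < ⟨(y:ℕ)-n, by have := y.isLt; omega⟩ by rw [Fin.mk_lt_mk]; omega)
        rw [Fin.lt_def] at h5
        exact h5
      · rw [hτ.1]; exact vF_ge_closer hτ hO h3
      · rw [hτ.1]; exact vF_ge_closer hτ hO h4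
      · rw [hτ.1, hτ.1]; exact h2
    · rintro ⟨x, y⟩ hm
      simp only [InvVS, NestS, Finset.mem_coe, Finset.mem_filter, Finset.mem_univ, true_and] at hm ⊢
      obtain ⟨h1, h2, h3, h4⟩ := hm
      have e1 := vF_add_n hn hτ hO h2
      have e2 := vF_add_n hn hτ hO h3
      have hidx : (idxF hn hO x : ℕ) < (idxF hn hO y : ℕ) := by
        have h5 := (eF_mono hO).lt_iff_lt (a := idxF hn hO x) (b := idxF hn hO y)
        rw [eF_idxF hn hO h2, eF_idxF hn hO h3] at h5
        have h6 : x < y := by rw [Fin.lt_def]; exact h1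
        exact Fin.lt_def.mp (h5.mp h6)
      refine ⟨⟨?_, ?_⟩, ?_⟩
      · show (idxF hn hO x : ℕ) + n < (idxF hn hO y : ℕ) + n
        omega
      · rw [e1, e2]; exact h4
      · show ¬ (idxF hn hO x : ℕ) + n < n
        omega
    · rintro ⟨x, y⟩ hm
      simp only [InvVS, Finset.mem_coe, Finset.mem_filter, Finset.mem_univ, true_and] at hm
      obtain ⟨⟨h1, h2⟩, h3⟩ := hm
      have h4 : ¬ (y:ℕ) < n := by omega
      have e1 := idx_tau_vF_ge hn hτ hO h3
      have e2 := idx_tau_vF_ge hn hτ hO h4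
      have hx := x.isLt; have hy := y.isLt
      exact Prod.ext (Fin.ext (by simp [e1]; omega)) (Fin.ext (by simp [e2]; omega))
    · rintro ⟨x, y⟩ hm
      simp only [NestS, Finset.mem_coe, Finset.mem_filter, Finset.mem_univ, true_and] at hm
      obtain ⟨h1, h2, h3, h4⟩ := hm
      have e1 := vF_add_n hn hτ hO h2
      have e2 := vF_add_n hn hτ hO h3
      refine Prod.ext ?_ ?_
      · show τ (vF hO _) = x
        rw [e1, hτ.1]
      · show τ (vF hO _) = y
        rw [e2, hτ.1]
  have hA0 : (((InvVS hO).filter (fun p => (p.1:ℕ) < n)).filter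
      (fun p => (p.2:ℕ) < n)).card = 0 := by rw [hA]; exact Finset.card_empty
  omega

lemma D2S_card (hτ : IsMatching τ) : (D2S τ).card = (DisjS τ).card := by
  classical
  apply Finset.card_nbij' (i := fun p => (p.2, τ p.1)) (j := fun q => (τ q.2, q.1))
  · rintro ⟨x, y⟩ hm
    simp only [D2S, DisjS, Finset.mem_coe, Finset.mem_filter, Finset.mem_univ, true_and] at hm ⊢
    have hx : ¬ (x:ℕ) < (τ x:ℕ) := by
      intro hop
      rw [gv_open hop] at hm
      have := (τ x).isLt
      omega
    have hy : (y:ℕ) < (τ y:ℕ) := by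
      by_contra hcl
      rw [gv_closed hcl] at hm
      have h2 := (τ x).isLt
      rcases Nat.lt_or_ge (x:ℕ) (τ x:ℕ) with h | h
      · rw [gv_open h] at hm; omega
      · rw [gv_closed (by omega)] at hm; omega
    rw [gv_open hy, gv_closed hx] at hm
    refine ⟨hy, ?_, by omega⟩
    · rw [hτ.1]
      have := tau_ne hτ x
      omega
  · rintro ⟨x, y⟩ hm
    simp only [D2S, DisjS, Finset.mem_coe, Finset.mem_filter, Finset.mem_univ, true_and] at hm ⊢
    obtain ⟨h1, h2, h3⟩ := hm
    have hcl : ¬ (τ y : ℕ) < (τ (τ y) : ℕ) := by rw [hτ.1]; omega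
    rw [gv_open h1, gv_closed hcl, hτ.1]
    omega
  · rintro ⟨x, y⟩ _
    exact Prod.ext (by show τ (τ x) = x; rw [hτ.1]) rfl
  · rintro ⟨x, y⟩ _
    exact Prod.ext rfl (by show τ (τ y) = y; rw [hτ.1])

lemma D1S_card (hτ : IsMatching τ) :
    (D1S τ).card = 2 * (NestS τ).card + (DisjS τ).card := by
  classical
  have hsplit := Finset.card_filter_add_card_filter_not
    (s := D1S τ) (p := fun p => (p.1:ℕ) < (τ p.1:ℕ))
  have hsplit2 := Finset.card_filter_add_card_filter_not
    (s := (D1S τ).filter (fun p => (p.1:ℕ) < (τ p.1:ℕ)))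
    (p := fun p => (p.2:ℕ) < (τ p.2:ℕ))
  have hsplit3 := Finset.card_filter_add_card_filter_not
    (s := (D1S τ).filter (fun p => ¬ (p.1:ℕ) < (τ p.1:ℕ)))
    (p := fun p => (p.2:ℕ) < (τ p.2:ℕ))
  -- oo piece equals NestS
  have hoo : ((D1S τ).filter (fun p => (p.1:ℕ) < (τ p.1:ℕ))).filter
      (fun p => (p.2:ℕ) < (τ p.2:ℕ)) = NestS τ := by
    ext ⟨x, y⟩
    simp only [D1S, NestS, Finset.mem_filter, Finset.mem_univ, true_and]
    constructor
    · rintro ⟨⟨⟨h1, h2⟩, h3⟩, h4⟩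
      rw [gv_open h3, gv_open h4] at h2
      exact ⟨h1, h3, h4, h2⟩
    · rintro ⟨h1, h2, h3, h4⟩
      rw [gv_open h2, gv_open h3]
      exact ⟨⟨⟨h1, h4⟩, h2⟩, h3⟩
  -- oc piece is empty
  have hoc : ((D1S τ).filter (fun p => (p.1:ℕ) < (τ p.1:ℕ))).filter
      (fun p => ¬ (p.2:ℕ) < (τ p.2:ℕ)) = ∅ := by
    rw [Finset.eq_empty_iff_forall_notMem]
    rintro ⟨x, y⟩ hm
    simp only [D1S, Finset.mem_coe, Finset.mem_filter, Finset.mem_univ, true_and] at hm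
    obtain ⟨⟨⟨h1, h2⟩, h3⟩, h4⟩ := hm
    rw [gv_open h3, gv_closed h4] at h2
    have := (τ x).isLt
    omega
  -- co piece ≅ DisjS
  have hco : (((D1S τ).filter (fun p => ¬ (p.1:ℕ) < (τ p.1:ℕ))).filter
      (fun p => (p.2:ℕ) < (τ p.2:ℕ))).card = (DisjS τ).card := by
    apply Finset.card_nbij' (i := fun p => (τ p.1, p.2)) (j := fun q => (τ q.1, q.2))
    · rintro ⟨x, y⟩ hm
      simp only [D1S, DisjS, Finset.mem_coe, Finset.mem_filter, Finset.mem_univ, true_and] at hm ⊢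
      obtain ⟨⟨⟨h1, h2⟩, h3⟩, h4⟩ := hm
      have := tau_ne hτ x
      refine ⟨by rw [hτ.1]; omega, h4, by rw [hτ.1]; exact h1⟩
    · rintro ⟨x, y⟩ hm
      simp only [D1S, DisjS, Finset.mem_coe, Finset.mem_filter, Finset.mem_univ, true_and] at hm ⊢
      obtain ⟨h1, h2, h3⟩ := hm
      have hcl : ¬ (τ x : ℕ) < (τ (τ x) : ℕ) := by rw [hτ.1]; omega
      have h4 := (τ y).isLt
      rw [gv_open h2, gv_closed hcl, hτ.1]
      exact ⟨⟨⟨by omega, by omega⟩, by omega⟩, h2⟩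
    · rintro ⟨x, y⟩ _
      exact Prod.ext (by show τ (τ x) = x; rw [hτ.1]) rfl
    · rintro ⟨x, y⟩ _
      exact Prod.ext (by show τ (τ x) = x; rw [hτ.1]) rfl
  -- cc piece ≅ NestS
  have hcc : (((D1S τ).filter (fun p => ¬ (p.1:ℕ) < (τ p.1:ℕ))).filter
      (fun p => ¬ (p.2:ℕ) < (τ p.2:ℕ))).card = (NestS τ).card := by
    apply Finset.card_nbij' (i := fun p => (τ p.2, τ p.1)) (j := fun q => (τ q.2, τ q.1))
    · rintro ⟨x, y⟩ hm
      simp only [D1S, NestS, Finset.mem_coe, Finset.mem_filter, Finset.mem_univ, true_and] at hm ⊢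
      obtain ⟨⟨⟨h1, h2⟩, h3⟩, h4⟩ := hm
      rw [gv_closed h3, gv_closed h4] at h2
      have hx := tau_ne hτ x
      have hy := tau_ne hτ y
      refine ⟨by omega, by rw [hτ.1]; omega, by rw [hτ.1]; omega, by rw [hτ.1, hτ.1]; omega⟩
    · rintro ⟨x, y⟩ hm
      simp only [D1S, NestS, Finset.mem_coe, Finset.mem_filter, Finset.mem_univ, true_and] at hm ⊢
      obtain ⟨h1, h2, h3, h4⟩ := hm
      have hclx : ¬ (τ x : ℕ) < (τ (τ x) : ℕ) := by rw [hτ.1]; omega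
      have hcly : ¬ (τ y : ℕ) < (τ (τ y) : ℕ) := by rw [hτ.1]; omega
      rw [gv_closed hclx, gv_closed hcly, hτ.1, hτ.1]
      exact ⟨⟨⟨h4, by omega⟩, by omega⟩, by omega⟩
    · rintro ⟨x, y⟩ _
      refine Prod.ext (by show τ (τ x) = x; rw [hτ.1]) (by show τ (τ y) = y; rw [hτ.1])
    · rintro ⟨x, y⟩ _
      refine Prod.ext (by show τ (τ x) = x; rw [hτ.1]) (by show τ (τ y) = y; rw [hτ.1])
  have hoo' := congrArg Finset.card hoo
  have hoc' := congrArg Finset.card hoc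
  rw [Finset.card_empty] at hoc'
  omega

end Counting2

section AffLenW

variable {n : ℕ} {τ : Fin (2*n) → Fin (2*n)}

def PhiW (n : ℕ) : Fin (2*n) × Fin (2*n) → ℤ × ℤ := fun p =>
  if (p.1:ℕ) = 0 then (((2*n:ℕ):ℤ), ((p.2:ℕ):ℤ) + ((2*n:ℕ):ℤ))
  else (((p.1:ℕ):ℤ), ((p.2:ℕ):ℤ))

lemma PhiW_injOn (hn : 0 < n) : Set.InjOn (PhiW n) ↑(InvVS (τ := τ) hO) := by
  rintro ⟨p1, q1⟩ _ ⟨p2, q2⟩ _ heq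
  have hp1 := p1.isLt; have hp2 := p2.isLt
  have hq1 := q1.isLt; have hq2 := q2.isLt
  simp only [PhiW] at heq
  split_ifs at heq with h1 h2 h2 <;> rw [Prod.mk.injEq] at heq <;>
    obtain ⟨e1, e2⟩ := heq
  · have hp : p1 = p2 := Fin.ext (by omega)
    have hq : q1 = q2 := Fin.ext (by omega)
    rw [hp, hq]
  · exfalso; omega
  · exfalso; omega
  · have hp : p1 = p2 := Fin.ext (by omega)
    have hq : q1 = q2 := Fin.ext (by omega)
    rw [hp, hq]

lemma affLen_w (hn : 0 < n) (hτ : IsMatching τ) (hO : (OSet τ).card = n) :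
    affLen (2*n) (mkAff n (uW hO)) = (InvVS hO).card := by
  classical
  have hM : (0:ℤ) < ((2*n:ℕ):ℤ) := by push_cast; omega
  have himg : {p : ℤ × ℤ | 1 ≤ p.1 ∧ p.1 ≤ ((2*n:ℕ):ℤ) ∧ p.1 < p.2 ∧
      mkAff n (uW hO) p.2 < mkAff n (uW hO) p.1} = PhiW n '' ↑(InvVS hO) := by
    ext ⟨i, j⟩
    simp only [Set.mem_setOf_eq, Set.mem_image, Finset.mem_coe]
    constructor
    · rintro ⟨h1, h2, h3, h4⟩
      obtain ⟨di, ri, hdi, rfl⟩ := exists_decomp hn i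
      obtain ⟨dj, rj, hdj, rfl⟩ := exists_decomp hn j
      rw [mkAff_decomp hn _ ri hdi rfl, mkAff_decomp hn _ rj hdj rfl] at h4
      simp only [uW] at h4
      have hri := ri.isLt; have hrj := rj.isLt
      have hvi := (vF hO ri).isLt; have hvj := (vF hO rj).isLt
      have hdd := dvd_trichot hM (dvd_sub hdj hdi)
      have hde : di = dj := by omega
      subst hde
      have hdi3 := dvd_trichot hM hdi
      have hcase : di = 0 ∨ (di = ((2*n:ℕ):ℤ) ∧ (ri:ℕ) = 0) := by omega
      rcases hcase with h0 | ⟨h0, hri0⟩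
      · subst h0
        refine ⟨(ri, rj), ?_, ?_⟩
        · simp only [InvVS, Finset.mem_filter, Finset.mem_univ, true_and]
          exact ⟨by omega, by omega⟩
        · simp only [PhiW, if_neg (show ¬ (ri:ℕ) = 0 by omega)]
          rw [Prod.mk.injEq]
          constructor <;> push_cast <;> ring
      · subst h0
        refine ⟨(ri, rj), ?_, ?_⟩
        · simp only [InvVS, Finset.mem_filter, Finset.mem_univ, true_and]
          exact ⟨by omega, by omega⟩
        · simp only [PhiW, if_pos hri0]
          rw [Prod.mk.injEq]
          constructor <;> push_cast [hri0] <;> ring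
    · rintro ⟨⟨p, q⟩, hmem, heq⟩
      have hi : i = (PhiW n (p, q)).1 := by rw [heq]
      have hj : j = (PhiW n (p, q)).2 := by rw [heq]
      subst hi; subst hj
      simp only [InvVS, Finset.mem_coe, Finset.mem_filter, Finset.mem_univ, true_and] at hmem
      obtain ⟨hlt, hv⟩ := hmem
      have hp := p.isLt; have hq := q.isLt
      have hvp := (vF hO p).isLt; have hvq := (vF hO q).isLt
      by_cases h0 : (p:ℕ) = 0
      · simp only [PhiW, if_pos h0]
        have hfi : mkAff n (uW hO) ((2*n:ℕ):ℤ) = ((2*n:ℕ):ℤ) + (uW hO p : ℤ) :=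
          mkAff_decomp hn _ p dvd_rfl (by push_cast [h0]; ring)
        have hfj : mkAff n (uW hO) (((q:ℕ):ℤ) + ((2*n:ℕ):ℤ))
            = ((2*n:ℕ):ℤ) + (uW hO q : ℤ) :=
          mkAff_decomp hn _ q dvd_rfl (by push_cast; ring)
        refine ⟨by omega, le_refl _, by omega, ?_⟩
        rw [hfi, hfj]
        simp only [uW]
        omega
      · simp only [PhiW, if_neg h0]
        have hfi : mkAff n (uW hO) ((p:ℕ):ℤ) = 0 + (uW hO p : ℤ) :=
          mkAff_decomp hn _ p (dvd_zero _) (by ring)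
        have hfj : mkAff n (uW hO) ((q:ℕ):ℤ) = 0 + (uW hO q : ℤ) :=
          mkAff_decomp hn _ q (dvd_zero _) (by ring)
        refine ⟨by omega, by omega, by omega, ?_⟩
        rw [hfi, hfj]
        simp only [uW]
        omega
  unfold affLen
  rw [himg, Set.ncard_image_of_injOn (PhiW_injOn hn), Set.ncard_coe_finset]

end AffLenW

section AffLenG

variable {n : ℕ} {τ : Fin (2*n) → Fin (2*n)}

lemma gv_lt4 (x : Fin (2*n)) : gv n τ x < 2*n + 2*n := by
  unfold gv; have := (τ x).isLt; split <;> omega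

def ESetG (n : ℕ) (τ : Fin (2*n) → Fin (2*n)) : Finset ((Fin (2*n) × Fin (2*n)) × Bool) :=
  (D1S τ ×ˢ {false}) ∪ (D2S τ ×ˢ {true})

def PhiG (n : ℕ) : (Fin (2*n) × Fin (2*n)) × Bool → ℤ × ℤ := fun t =>
  cond t.2
    (if (t.1.1:ℕ) = 0 then (((2*n:ℕ):ℤ), ((t.1.2:ℕ):ℤ) + 2*((2*n:ℕ):ℤ))
     else (((t.1.1:ℕ):ℤ), ((t.1.2:ℕ):ℤ) + ((2*n:ℕ):ℤ)))
    (if (t.1.1:ℕ) = 0 then (((2*n:ℕ):ℤ), ((t.1.2:ℕ):ℤ) + ((2*n:ℕ):ℤ))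
     else (((t.1.1:ℕ):ℤ), ((t.1.2:ℕ):ℤ)))

lemma ESetG_card : (ESetG n τ).card = (D1S τ).card + (D2S τ).card := by
  classical
  rw [ESetG, Finset.card_union_of_disjoint, Finset.card_product, Finset.card_product]
  · simp
  · rw [Finset.disjoint_left]
    rintro ⟨p, b⟩ h1 h2
    simp only [Finset.mem_product, Finset.mem_singleton] at h1 h2
    rw [h1.2] at h2
    exact absurd h2.2 (by simp)

lemma PhiG_injOn (hn : 0 < n) : Set.InjOn (PhiG n) ↑(ESetG n τ) := by
  rintro ⟨⟨p1, q1⟩, b1⟩ _ ⟨⟨p2, q2⟩, b2⟩ _ heq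
  have hp1 := p1.isLt; have hp2 := p2.isLt
  have hq1 := q1.isLt; have hq2 := q2.isLt
  cases b1 <;> cases b2 <;>
    simp only [PhiG, cond_true, cond_false] at heq <;>
    split_ifs at heq with h1 h2 <;>
    rw [Prod.mk.injEq] at heq <;>
    obtain ⟨e1, e2⟩ := heq <;>
    first
      | (exfalso; omega)
      | (have hp : p1 = p2 := Fin.ext (by omega)
         have hq : q1 = q2 := Fin.ext (by omega)
         rw [hp, hq])

lemma affLen_g (hn : 0 < n) (hτ : IsMatching τ) :
    affLen (2*n) (gTau n τ) = (D1S τ).card + (D2S τ).card := by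
  classical
  rw [gTau_eq_mkAff]
  have hM : (0:ℤ) < ((2*n:ℕ):ℤ) := by push_cast; omega
  have himg : {p : ℤ × ℤ | 1 ≤ p.1 ∧ p.1 ≤ ((2*n:ℕ):ℤ) ∧ p.1 < p.2 ∧
      mkAff n (gv n τ) p.2 < mkAff n (gv n τ) p.1} = PhiG n '' ↑(ESetG n τ) := by
    ext ⟨i, j⟩
    simp only [Set.mem_setOf_eq, Set.mem_image, Finset.mem_coe]
    constructor
    · rintro ⟨h1, h2, h3, h4⟩
      obtain ⟨di, ri, hdi, rfl⟩ := exists_decomp hn i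
      obtain ⟨dj, rj, hdj, rfl⟩ := exists_decomp hn j
      rw [mkAff_decomp hn _ ri hdi rfl, mkAff_decomp hn _ rj hdj rfl] at h4
      have hri := ri.isLt; have hrj := rj.isLt
      have hgi := gv_lt4 (τ := τ) ri; have hgj := gv_lt4 (τ := τ) rj
      have hdd := dvd_trichot hM (dvd_sub hdj hdi)
      have hor := dvd_small hM (dvd_sub hdj hdi) (by omega) (by omega)
      have hdi3 := dvd_trichot hM hdi
      have hcase : di = 0 ∨ (di = ((2*n:ℕ):ℤ) ∧ (ri:ℕ) = 0) := by omega
      rcases hor with hde | hde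
      · -- same block : D1S element, bool false
        have hde' : di = dj := by omega
        subst hde'
        rcases hcase with h0 | ⟨h0, hri0⟩ <;> subst h0
        · refine ⟨((ri, rj), false), ?_, ?_⟩
          · simp only [ESetG, Finset.mem_union, Finset.mem_product, Finset.mem_singleton,
              D1S, Finset.mem_filter, Finset.mem_univ, true_and]
            left
            exact ⟨⟨by omega, by omega⟩, trivial⟩
          · simp only [PhiG, cond_false, if_neg (show ¬ (ri:ℕ) = 0 by omega)]
            rw [Prod.mk.injEq]
            constructor <;> push_cast <;> ring
        · refine ⟨((ri, rj), false), ?_, ?_⟩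
          · simp only [ESetG, Finset.mem_union, Finset.mem_product, Finset.mem_singleton,
              D1S, Finset.mem_filter, Finset.mem_univ, true_and]
            left
            exact ⟨⟨by omega, by omega⟩, trivial⟩
          · simp only [PhiG, cond_false, if_pos hri0]
            rw [Prod.mk.injEq]
            constructor <;> push_cast [hri0] <;> ring
      · -- shifted block : D2S element, bool true
        have hde' : dj = di + ((2*n:ℕ):ℤ) := by omega
        subst hde'
        rcases hcase with h0 | ⟨h0, hri0⟩ <;> subst h0
        · refine ⟨((ri, rj), true), ?_, ?_⟩
          · simp only [ESetG, Finset.mem_union, Finset.mem_product, Finset.mem_singleton,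
              D2S, Finset.mem_filter, Finset.mem_univ, true_and]
            right
            exact ⟨by omega, trivial⟩
          · simp only [PhiG, cond_true, if_neg (show ¬ (ri:ℕ) = 0 by omega)]
            rw [Prod.mk.injEq]
            constructor <;> push_cast <;> ring
        · refine ⟨((ri, rj), true), ?_, ?_⟩
          · simp only [ESetG, Finset.mem_union, Finset.mem_product, Finset.mem_singleton,
              D2S, Finset.mem_filter, Finset.mem_univ, true_and]
            right
            exact ⟨by omega, trivial⟩
          · simp only [PhiG, cond_true, if_pos hri0]
            rw [Prod.mk.injEq]
            constructor <;> push_cast [hri0] <;> ring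
    · rintro ⟨⟨⟨p, q⟩, b⟩, hmem, heq⟩
      have hi : i = (PhiG n ((p, q), b)).1 := by rw [heq]
      have hj : j = (PhiG n ((p, q), b)).2 := by rw [heq]
      subst hi; subst hj
      simp only [ESetG, Finset.mem_union, Finset.mem_product, Finset.mem_singleton,
        D1S, D2S, Finset.mem_coe, Finset.mem_filter, Finset.mem_univ, true_and] at hmem
      have hp := p.isLt; have hq := q.isLt
      have hgp := gv_lt4 (τ := τ) p; have hgq := gv_lt4 (τ := τ) q
      rcases hmem with ⟨hd, hb⟩ | ⟨hd, hb⟩ <;> subst hb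
      · obtain ⟨hlt, hv⟩ := hd
        by_cases h0 : (p:ℕ) = 0
        · simp only [PhiG, cond_false, if_pos h0]
          have hfi : mkAff n (gv n τ) ((2*n:ℕ):ℤ) = ((2*n:ℕ):ℤ) + (gv n τ p : ℤ) :=
            mkAff_decomp hn _ p dvd_rfl (by push_cast [h0]; ring)
          have hfj : mkAff n (gv n τ) (((q:ℕ):ℤ) + ((2*n:ℕ):ℤ))
              = ((2*n:ℕ):ℤ) + (gv n τ q : ℤ) :=
            mkAff_decomp hn _ q dvd_rfl (by push_cast; ring)
          refine ⟨by omega, le_refl _, by omega, ?_⟩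
          rw [hfi, hfj]
          omega
        · simp only [PhiG, cond_false, if_neg h0]
          have hfi : mkAff n (gv n τ) ((p:ℕ):ℤ) = 0 + (gv n τ p : ℤ) :=
            mkAff_decomp hn _ p (dvd_zero _) (by ring)
          have hfj : mkAff n (gv n τ) ((q:ℕ):ℤ) = 0 + (gv n τ q : ℤ) :=
            mkAff_decomp hn _ q (dvd_zero _) (by ring)
          refine ⟨by omega, by omega, by omega, ?_⟩
          rw [hfi, hfj]
          omega
      · by_cases h0 : (p:ℕ) = 0
        · simp only [PhiG, cond_true, if_pos h0]
          have hfi : mkAff n (gv n τ) ((2*n:ℕ):ℤ) = ((2*n:ℕ):ℤ) + (gv n τ p : ℤ) :=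
            mkAff_decomp hn _ p dvd_rfl (by push_cast [h0]; ring)
          have hfj : mkAff n (gv n τ) (((q:ℕ):ℤ) + 2*((2*n:ℕ):ℤ))
              = 2*((2*n:ℕ):ℤ) + (gv n τ q : ℤ) :=
            mkAff_decomp hn _ q ⟨2, by ring⟩ (by push_cast; ring)
          refine ⟨by omega, le_refl _, by omega, ?_⟩
          rw [hfi, hfj]
          omega
        · simp only [PhiG, cond_true, if_neg h0]
          have hfi : mkAff n (gv n τ) ((p:ℕ):ℤ) = 0 + (gv n τ p : ℤ) :=
            mkAff_decomp hn _ p (dvd_zero _) (by ring)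
          have hfj : mkAff n (gv n τ) (((q:ℕ):ℤ) + ((2*n:ℕ):ℤ))
              = ((2*n:ℕ):ℤ) + (gv n τ q : ℤ) :=
            mkAff_decomp hn _ q dvd_rfl (by push_cast; ring)
          refine ⟨by omega, by omega, by omega, ?_⟩
          rw [hfi, hfj]
          omega
  unfold affLen
  rw [himg, Set.ncard_image_of_injOn (PhiG_injOn hn), Set.ncard_coe_finset, ESetG_card]

end AffLenG

end Stmt4Aux

theorem stmt4 (n : ℕ) (hn : 0 < n) (τ : Fin (2*n) → Fin (2*n)) (hτ : IsMatching τ) :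
    ∃ w : ℤ → ℤ, IsAffinePerm (2*n) w ∧ windowSum (2*n) w = 0 ∧
      (∀ i : ℤ, gTau n τ (w i) = w (i + n)) ∧
      affLen (2*n) w + crossNum τ = n*(n-1)/2 ∧
      affLen (2*n) (gTau n τ) = 2 * affLen (2*n) w := by
  have hO : (Stmt4Aux.OSet τ).card = n := Stmt4Aux.card_OSet hτ
  refine ⟨Stmt4Aux.mkAff n (Stmt4Aux.uW hO), Stmt4Aux.w_affine hn hτ hO,
    Stmt4Aux.w_windowSum hn hτ hO, fun i => Stmt4Aux.w_conj hn hτ hO i, ?_, ?_⟩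
  · rw [Stmt4Aux.affLen_w hn hτ hO, Stmt4Aux.InvVS_card hn hτ hO, Stmt4Aux.crossNum_eq]
    have h1 := Stmt4Aux.OPS_card_eq hτ
    have h2 := Stmt4Aux.OPS_card hn hτ hO
    omega
  · rw [Stmt4Aux.affLen_g hn hτ, Stmt4Aux.affLen_w hn hτ hO, Stmt4Aux.InvVS_card hn hτ hO,
      Stmt4Aux.D1S_card hτ, Stmt4Aux.D2S_card hτ]
    ring

end
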